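/- Let s ∈ S^n be a fixed sequence with empirical type T_s, and let Z_1,...,Z_n be independent with Z_i ∼ P_{Z|S}(·|s_i) for a fixed channel P_{Z|S} on finite alphabets. Then Pr(‖T_{s,Z} − T_s·P_{Z|S}‖_∞ > 3δ₀) ≤ |S|·|Z|·e^{−2nδ₀³}, where T_{s,Z}(a,b) = (1/n)·#{i : s_i=a, Z_i=b}. -/

import Mathlib

open MeasureTheory ProbabilityTheory

lemma exp_mul_le_of_abs_le {y : ℝ} (hy : |y| ≤ 1) (t : ℝ) :
    Real.exp (t * y) ≤ (1 + y) / 2 * Real.exp t + (1 - y) / 2 * Real.exp (-t) := by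
  obtain ⟨h1, h2⟩ := abs_le.mp hy
  have := convexOn_exp.2 (Set.mem_univ t) (Set.mem_univ (-t))
    (show (0:ℝ) ≤ (1 + y) / 2 by linarith) (show (0:ℝ) ≤ (1 - y) / 2 by linarith)
    (show (1 + y) / 2 + (1 - y) / 2 = 1 by ring)
  simp only [smul_eq_mul] at this
  calc Real.exp (t * y) = Real.exp ((1+y)/2 * t + (1-y)/2 * (-t)) := by ring_nf
    _ ≤ (1 + y) / 2 * Real.exp t + (1 - y) / 2 * Real.exp (-t) := this

lemma mgf_ind_le {Ω : Type*} [MeasurableSpace Ω] (μ : Measure Ω) [IsProbabilityMeasure μ]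
    (P : Ω → Prop) [DecidablePred P] (hP : MeasurableSet {ω | P ω})
    {p : ℝ} (hp0 : 0 ≤ p) (hp1 : p ≤ 1) (hμ : μ {ω | P ω} = ENNReal.ofReal p) (t : ℝ) :
    mgf (fun ω => (if P ω then (1:ℝ) else 0) - p) μ t ≤ Real.exp (t ^ 2 / 2) := by
  have hkey : (fun ω => Real.exp (t * ((if P ω then (1:ℝ) else 0) - p)))
      = fun ω => Real.exp (t * (0 - p)) +
        Set.indicator {ω | P ω} (fun _ => Real.exp (t * (1 - p)) - Real.exp (t * (0 - p))) ω := by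
    ext ω
    by_cases h : P ω <;> simp [h, Set.indicator_of_mem, Set.indicator_of_notMem]
  have hmgf : mgf (fun ω => (if P ω then (1:ℝ) else 0) - p) μ t
      = p * Real.exp (t * (1 - p)) + (1 - p) * Real.exp (t * (0 - p)) := by
    rw [mgf, hkey, integral_add (integrable_const _)
      ((integrable_const _).indicator hP)]
    rw [integral_indicator_const _ hP, integral_const]
    simp [measureReal_def, hμ, ENNReal.toReal_ofReal hp0]
    ring
  rw [hmgf]
  have h1 := exp_mul_le_of_abs_le (y := 1 - p) (abs_le.mpr ⟨by linarith, by linarith⟩) t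
  have h2 := exp_mul_le_of_abs_le (y := 0 - p) (abs_le.mpr ⟨by linarith, by linarith⟩) t
  have hc : Real.cosh t ≤ Real.exp (t ^ 2 / 2) := Real.cosh_le_exp_half_sq t
  rw [Real.cosh_eq] at hc
  nlinarith [mul_le_mul_of_nonneg_left h1 hp0,
    mul_le_mul_of_nonneg_left h2 (by linarith : (0:ℝ) ≤ 1 - p),
    Real.exp_pos t, Real.exp_pos (-t)]

lemma chernoff_aux {Ω : Type*} [MeasurableSpace Ω] (μ : Measure Ω) [IsProbabilityMeasure μ]
    {n : ℕ} (X : Fin n → Ω → ℝ) (hXmeas : ∀ i, Measurable (X i))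
    (hXindep : iIndepFun X μ)
    (hXbdd : ∀ i ω, |X i ω| ≤ 1)
    (hXmgf : ∀ i t, mgf (X i) μ t ≤ Real.exp (t ^ 2 / 2))
    (A : Finset (Fin n)) (δ : ℝ) (hδ : 0 < δ) :
    μ {ω | 3 * δ * n ≤ ∑ i ∈ A, X i ω} ≤ ENNReal.ofReal (Real.exp (-(9/2) * n * δ ^ 2)) := by
  set t : ℝ := 3 * δ with ht
  have ht0 : 0 ≤ t := by positivity
  have hsum_eq : (∑ i ∈ A, X i) = fun ω => ∑ i ∈ A, X i ω := by
    ext ω; simp [Finset.sum_apply]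
  have hSmeas : Measurable (fun ω => ∑ i ∈ A, X i ω) :=
    Finset.measurable_sum A (fun i _ => hXmeas i)
  have hSbdd : ∀ ω, |∑ i ∈ A, X i ω| ≤ (n : ℝ) := by
    intro ω
    calc |∑ i ∈ A, X i ω| ≤ ∑ i ∈ A, |X i ω| := Finset.abs_sum_le_sum_abs _ _
      _ ≤ ∑ _i ∈ A, (1:ℝ) := Finset.sum_le_sum (fun i _ => hXbdd i ω)
      _ = A.card := by simp
      _ ≤ (n : ℝ) := by
          have := Finset.card_le_univ A
          simp only [Finset.card_univ, Fintype.card_fin] at this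
          exact_mod_cast this
  have hint : Integrable (fun ω => Real.exp (t * (∑ i ∈ A, X i ω))) μ := by
    refine Integrable.mono' (integrable_const (Real.exp (t * n)))
      ((hSmeas.const_mul t).exp.aestronglyMeasurable) (ae_of_all _ fun ω => ?_)
    rw [Real.norm_eq_abs, abs_of_pos (Real.exp_pos _), Real.exp_le_exp]
    have := (abs_le.mp (hSbdd ω)).2
    nlinarith
  have hchern := measure_ge_le_exp_mul_mgf (μ := μ) (X := fun ω => ∑ i ∈ A, X i ω)
    (t := t) (3 * δ * n) ht0 hint
  have hmgfsum : mgf (fun ω => ∑ i ∈ A, X i ω) μ t ≤ Real.exp (n * (t ^ 2 / 2)) := by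
    rw [← hsum_eq, hXindep.mgf_sum hXmeas A]
    calc (∏ i ∈ A, mgf (X i) μ t) ≤ ∏ _i ∈ A, Real.exp (t ^ 2 / 2) :=
          Finset.prod_le_prod (fun i _ => mgf_nonneg) (fun i _ => hXmgf i t)
      _ = Real.exp (t ^ 2 / 2) ^ A.card := by rw [Finset.prod_const]
      _ ≤ Real.exp (t ^ 2 / 2) ^ n := by
          apply pow_le_pow_right₀ (Real.one_le_exp (by positivity))
          have := Finset.card_le_univ A
          simpa using this
      _ = Real.exp (n * (t ^ 2 / 2)) := by rw [← Real.exp_nat_mul]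
  have hfinal : (μ {ω | 3 * δ * n ≤ ∑ i ∈ A, X i ω}).toReal
      ≤ Real.exp (-(9/2) * n * δ ^ 2) := by
    calc (μ {ω | 3 * δ * n ≤ ∑ i ∈ A, X i ω}).toReal
        ≤ Real.exp (-t * (3 * δ * n)) * mgf (fun ω => ∑ i ∈ A, X i ω) μ t := hchern
      _ ≤ Real.exp (-t * (3 * δ * n)) * Real.exp (n * (t ^ 2 / 2)) := by
          exact mul_le_mul_of_nonneg_left hmgfsum (Real.exp_nonneg _)
      _ = Real.exp (-(9/2) * n * δ ^ 2) := by
          rw [← Real.exp_add]; congr 1; rw [ht]; ring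
  calc μ {ω | 3 * δ * n ≤ ∑ i ∈ A, X i ω}
      = ENNReal.ofReal ((μ {ω | 3 * δ * n ≤ ∑ i ∈ A, X i ω}).toReal) :=
        (ENNReal.ofReal_toReal (measure_ne_top _ _)).symm
    _ ≤ ENNReal.ofReal (Real.exp (-(9/2) * n * δ ^ 2)) := ENNReal.ofReal_le_ofReal hfinal
lemma pair_bound {S 𝒵 : Type*} [Fintype S] [DecidableEq S] [Fintype 𝒵] [DecidableEq 𝒵]
    [MeasurableSpace 𝒵] [MeasurableSingletonClass 𝒵]
    {Ω : Type*} [MeasurableSpace Ω] (μ : Measure Ω) [IsProbabilityMeasure μ]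
    (n : ℕ) (hn : 0 < n) (s : Fin n → S)
    (W : S → 𝒵 → ℝ) (hW0 : ∀ a b, 0 ≤ W a b) (hW1 : ∀ a, ∑ b, W a b = 1)
    (Z : Fin n → Ω → 𝒵) (hmeas : ∀ i, Measurable (Z i))
    (hindep : iIndepFun Z μ)
    (hlaw : ∀ i b, μ {ω | Z i ω = b} = ENNReal.ofReal (W (s i) b))
    (δ0 : ℝ) (hδ0 : 0 < δ0) (a : S) (b : 𝒵) :
    μ {ω | 3 * δ0 <
        |((Finset.univ.filter (fun i : Fin n => s i = a ∧ Z i ω = b)).card : ℝ) / n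
          - (((Finset.univ.filter (fun i : Fin n => s i = a)).card : ℝ) / n) * W a b|} ≤
      ENNReal.ofReal (2 * Real.exp (-(9/2) * n * δ0 ^ 2)) := by
  have hWle1 : ∀ i, W (s i) b ≤ 1 := fun i => by
    rw [← hW1 (s i)]
    exact Finset.single_le_sum (fun c _ => hW0 (s i) c) (Finset.mem_univ b)
  set X : Fin n → Ω → ℝ := fun i ω => (if Z i ω = b then (1:ℝ) else 0) - W (s i) b with hX
  have hXmeas : ∀ i, Measurable (X i) := by
    intro i
    have : X i = (fun z => (if z = b then (1:ℝ) else 0) - W (s i) b) ∘ Z i := rfl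
    rw [this]
    exact (measurable_of_countable _).comp (hmeas i)
  have hXindep : iIndepFun X μ :=
    hindep.comp (fun i z => (if z = b then (1:ℝ) else 0) - W (s i) b)
      (fun i => measurable_of_countable _)
  have hXbdd : ∀ i ω, |X i ω| ≤ 1 := by
    intro i ω
    rw [hX]
    have h0 := hW0 (s i) b
    have h1 := hWle1 i
    dsimp only
    split_ifs <;> rw [abs_le] <;> constructor <;> linarith
  have hXmgf : ∀ i t, mgf (X i) μ t ≤ Real.exp (t ^ 2 / 2) := by
    intro i t
    exact mgf_ind_le μ (fun ω => Z i ω = b)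
      ((hmeas i) (measurableSet_singleton b)) (hW0 (s i) b) (hWle1 i) (hlaw i b) t
  set A : Finset (Fin n) := Finset.univ.filter (fun i => s i = a) with hA
  have hsum : ∀ ω, ((Finset.univ.filter (fun i : Fin n => s i = a ∧ Z i ω = b)).card : ℝ)
      - (A.card : ℝ) * W a b = ∑ i ∈ A, X i ω := by
    intro ω
    rw [hX]
    rw [Finset.sum_sub_distrib]
    congr 1
    · rw [Finset.sum_boole, hA, Finset.filter_filter]
    · have : ∑ i ∈ A, W (s i) b = ∑ _i ∈ A, W a b :=
        Finset.sum_congr rfl (fun i hi => by rw [(Finset.mem_filter.mp hi).2])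
      rw [this, Finset.sum_const, nsmul_eq_mul]
  have hnR : (0:ℝ) < n := by exact_mod_cast hn
  have hsubset : {ω | 3 * δ0 <
        |((Finset.univ.filter (fun i : Fin n => s i = a ∧ Z i ω = b)).card : ℝ) / n
          - ((A.card : ℝ) / n) * W a b|} ⊆
      {ω | 3 * δ0 * n ≤ ∑ i ∈ A, X i ω} ∪ {ω | 3 * δ0 * n ≤ ∑ i ∈ A, (fun i ω => -(X i ω)) i ω} := by
    intro ω hω
    simp only [Set.mem_setOf_eq] at hω
    have heq : ((Finset.univ.filter (fun i : Fin n => s i = a ∧ Z i ω = b)).card : ℝ) / n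
        - ((A.card : ℝ) / n) * W a b = (∑ i ∈ A, X i ω) / n := by
      rw [← hsum ω]; ring
    rw [heq, abs_div, abs_of_pos hnR, lt_div_iff₀ hnR] at hω
    rcases le_abs.mp hω.le with h | h
    · left; exact h
    · right
      show 3 * δ0 * n ≤ ∑ i ∈ A, -(X i ω)
      rw [Finset.sum_neg_distrib]
      exact h
  calc μ _ ≤ μ ({ω | 3 * δ0 * n ≤ ∑ i ∈ A, X i ω}
        ∪ {ω | 3 * δ0 * n ≤ ∑ i ∈ A, (fun i ω => -(X i ω)) i ω}) := measure_mono hsubset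
    _ ≤ μ {ω | 3 * δ0 * n ≤ ∑ i ∈ A, X i ω}
        + μ {ω | 3 * δ0 * n ≤ ∑ i ∈ A, (fun i ω => -(X i ω)) i ω} := measure_union_le _ _
    _ ≤ ENNReal.ofReal (Real.exp (-(9/2) * n * δ0 ^ 2))
        + ENNReal.ofReal (Real.exp (-(9/2) * n * δ0 ^ 2)) := by
        gcongr
        · exact chernoff_aux μ X hXmeas hXindep hXbdd hXmgf A δ0 hδ0
        · refine chernoff_aux μ (fun i ω => -(X i ω)) (fun i => (hXmeas i).neg)
            (hXindep.comp (fun _ => (Neg.neg : ℝ → ℝ)) (fun _ => measurable_neg))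
            (fun i ω => by rw [abs_neg]; exact hXbdd i ω) (fun i t => ?_) A δ0 hδ0
          have : mgf (fun ω => -(X i ω)) μ t = mgf (X i) μ (-t) := by
            simp only [mgf, mul_neg, neg_mul]
          rw [this]
          calc mgf (X i) μ (-t) ≤ Real.exp ((-t) ^ 2 / 2) := hXmgf i (-t)
            _ = Real.exp (t ^ 2 / 2) := by rw [neg_sq]
    _ = ENNReal.ofReal (2 * Real.exp (-(9/2) * n * δ0 ^ 2)) := by
        rw [← ENNReal.ofReal_add (Real.exp_nonneg _) (Real.exp_nonneg _)]
        congr 1; ring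


/-- Let `s ∈ S^n` be a fixed sequence with empirical type `T_s`, and let `Z₁,…,Zₙ` be
independent with `Zᵢ ∼ P_{Z|S}(·|sᵢ)`. Then
`Pr(‖T_{s,Z} − T_s·P_{Z|S}‖_∞ > 3δ₀) ≤ |S|·|Z|·e^{−2nδ₀³}`. -/
theorem stmt6 {S 𝒵 : Type*} [Fintype S] [DecidableEq S] [Fintype 𝒵] [DecidableEq 𝒵]
    [MeasurableSpace 𝒵] [MeasurableSingletonClass 𝒵]
    {Ω : Type*} [MeasurableSpace Ω] (μ : Measure Ω) [IsProbabilityMeasure μ]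
    (n : ℕ) (hn : 0 < n) (s : Fin n → S)
    (W : S → 𝒵 → ℝ) (hW0 : ∀ a b, 0 ≤ W a b) (hW1 : ∀ a, ∑ b, W a b = 1)
    (Z : Fin n → Ω → 𝒵) (hmeas : ∀ i, Measurable (Z i))
    (hindep : iIndepFun Z μ)
    (hlaw : ∀ i b, μ {ω | Z i ω = b} = ENNReal.ofReal (W (s i) b))
    (δ0 : ℝ) (hδ0 : 0 < δ0) :
    μ {ω | ∃ (a : S) (b : 𝒵), 3 * δ0 <
        |((Finset.univ.filter (fun i : Fin n => s i = a ∧ Z i ω = b)).card : ℝ) / n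
          - (((Finset.univ.filter (fun i : Fin n => s i = a)).card : ℝ) / n) * W a b|} ≤
      ENNReal.ofReal ((Fintype.card S : ℝ) * (Fintype.card 𝒵) *
        Real.exp (-2 * n * δ0 ^ 3)) := by
  have hnR : (0:ℝ) < n := by exact_mod_cast hn
  have hcard : ∀ (p : Fin n → Prop) (_ : DecidablePred p),
      ((Finset.univ.filter p).card : ℝ) ≤ n := by
    intro p hp
    have h := Finset.card_filter_le (Finset.univ : Finset (Fin n)) p
    rw [Finset.card_univ, Fintype.card_fin] at h
    exact_mod_cast h
  by_cases h13 : 1 ≤ 3 * δ0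
  · have hempty : {ω | ∃ (a : S) (b : 𝒵), 3 * δ0 <
        |((Finset.univ.filter (fun i : Fin n => s i = a ∧ Z i ω = b)).card : ℝ) / n
          - (((Finset.univ.filter (fun i : Fin n => s i = a)).card : ℝ) / n) * W a b|} = ∅ := by
      ext ω
      simp only [Set.mem_setOf_eq, Set.mem_empty_iff_false, iff_false, not_exists, not_lt]
      intro a b
      have h1 : ((Finset.univ.filter (fun i : Fin n => s i = a ∧ Z i ω = b)).card : ℝ) / n ≤ 1 :=
        (div_le_one hnR).mpr (hcard _ _)
      have h2 : (0:ℝ) ≤ ((Finset.univ.filter (fun i : Fin n => s i = a ∧ Z i ω = b)).card : ℝ) / n :=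
        by positivity
      have h3 : (((Finset.univ.filter (fun i : Fin n => s i = a)).card : ℝ) / n) * W a b ≤ 1 := by
        have hw1 : W a b ≤ 1 := by
          rw [← hW1 a]; exact Finset.single_le_sum (fun c _ => hW0 a c) (Finset.mem_univ b)
        have hq : (((Finset.univ.filter (fun i : Fin n => s i = a)).card : ℝ) / n) ≤ 1 :=
          (div_le_one hnR).mpr (hcard (fun i => s i = a) inferInstance)
        nlinarith [hW0 a b, div_nonneg (Nat.cast_nonneg (Finset.univ.filter (fun i : Fin n => s i = a)).card) hnR.le]
      have h4 : (0:ℝ) ≤ (((Finset.univ.filter (fun i : Fin n => s i = a)).card : ℝ) / n) * W a b :=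
        mul_nonneg (by positivity) (hW0 a b)
      refine le_trans (abs_le.mpr ⟨by linarith, by linarith⟩) h13
    rw [hempty]
    simp
  push_neg at h13
  by_cases hZ1 : Fintype.card 𝒵 ≤ 1
  · have hempty : {ω | ∃ (a : S) (b : 𝒵), 3 * δ0 <
        |((Finset.univ.filter (fun i : Fin n => s i = a ∧ Z i ω = b)).card : ℝ) / n
          - (((Finset.univ.filter (fun i : Fin n => s i = a)).card : ℝ) / n) * W a b|} = ∅ := by
      haveI : Subsingleton 𝒵 := Fintype.card_le_one_iff_subsingleton.mp hZ1
      ext ω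
      simp only [Set.mem_setOf_eq, Set.mem_empty_iff_false, iff_false, not_exists, not_lt]
      intro a b
      have huniv : (Finset.univ : Finset 𝒵) = {b} := by
        ext z; simp [Subsingleton.elim z b]
      have hwb : W a b = 1 := by
        have := hW1 a
        rwa [huniv, Finset.sum_singleton] at this
      have hfilt : Finset.univ.filter (fun i : Fin n => s i = a ∧ Z i ω = b)
          = Finset.univ.filter (fun i : Fin n => s i = a) := by
        apply Finset.filter_congr
        intro i _
        simp [Subsingleton.elim (Z i ω) b]
      rw [hfilt, hwb, mul_one, sub_self, abs_zero]
      linarith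
    rw [hempty]
    simp
  push_neg at hZ1
  have hS1 : 1 ≤ Fintype.card S := Fintype.card_pos_iff.mpr ⟨s ⟨0, hn⟩⟩
  by_cases hc : 2 ≤ Real.exp (23/2 * n * δ0 ^ 3)
  · -- union bound regime
    have key : ∀ (a : S) (b : 𝒵), μ {ω | 3 * δ0 <
        |((Finset.univ.filter (fun i : Fin n => s i = a ∧ Z i ω = b)).card : ℝ) / n
          - (((Finset.univ.filter (fun i : Fin n => s i = a)).card : ℝ) / n) * W a b|} ≤
        ENNReal.ofReal (Real.exp (-2 * n * δ0 ^ 3)) := by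
      intro a b
      refine (pair_bound μ n hn s W hW0 hW1 Z hmeas hindep hlaw δ0 hδ0 a b).trans
        (ENNReal.ofReal_le_ofReal ?_)
      calc 2 * Real.exp (-(9/2) * n * δ0 ^ 2)
          ≤ Real.exp (23/2 * n * δ0 ^ 3) * Real.exp (-(9/2) * n * δ0 ^ 2) :=
            mul_le_mul_of_nonneg_right hc (Real.exp_nonneg _)
        _ = Real.exp (23/2 * n * δ0 ^ 3 + -(9/2) * n * δ0 ^ 2) := (Real.exp_add _ _).symm
        _ ≤ Real.exp (-2 * n * δ0 ^ 3) := by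
            apply Real.exp_le_exp.mpr
            nlinarith [mul_nonneg (mul_nonneg hnR.le (sq_nonneg δ0))
              (by linarith : (0:ℝ) ≤ 1 - 3 * δ0)]
    have hset : {ω | ∃ (a : S) (b : 𝒵), 3 * δ0 <
        |((Finset.univ.filter (fun i : Fin n => s i = a ∧ Z i ω = b)).card : ℝ) / n
          - (((Finset.univ.filter (fun i : Fin n => s i = a)).card : ℝ) / n) * W a b|}
        = ⋃ (q : S × 𝒵), {ω | 3 * δ0 <
        |((Finset.univ.filter (fun i : Fin n => s i = q.1 ∧ Z i ω = q.2)).card : ℝ) / n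
          - (((Finset.univ.filter (fun i : Fin n => s i = q.1)).card : ℝ) / n) * W q.1 q.2|} := by
      ext ω
      simp only [Set.mem_setOf_eq, Set.mem_iUnion, Prod.exists]
    rw [hset]
    calc μ _ ≤ ∑' (q : S × 𝒵), μ {ω | 3 * δ0 <
        |((Finset.univ.filter (fun i : Fin n => s i = q.1 ∧ Z i ω = q.2)).card : ℝ) / n
          - (((Finset.univ.filter (fun i : Fin n => s i = q.1)).card : ℝ) / n) * W q.1 q.2|} :=
          measure_iUnion_le _
      _ = ∑ q : S × 𝒵, μ {ω | 3 * δ0 <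
        |((Finset.univ.filter (fun i : Fin n => s i = q.1 ∧ Z i ω = q.2)).card : ℝ) / n
          - (((Finset.univ.filter (fun i : Fin n => s i = q.1)).card : ℝ) / n) * W q.1 q.2|} :=
          tsum_fintype _
      _ ≤ ∑ _q : S × 𝒵, ENNReal.ofReal (Real.exp (-2 * n * δ0 ^ 3)) :=
          Finset.sum_le_sum (fun q _ => key q.1 q.2)
      _ = (Fintype.card S * Fintype.card 𝒵 : ℕ) • ENNReal.ofReal (Real.exp (-2 * n * δ0 ^ 3)) := by
          rw [Finset.sum_const, Finset.card_univ, Fintype.card_prod]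
      _ ≤ ENNReal.ofReal ((Fintype.card S : ℝ) * (Fintype.card 𝒵) *
          Real.exp (-2 * n * δ0 ^ 3)) := by
          rw [nsmul_eq_mul, ← ENNReal.ofReal_natCast (Fintype.card S * Fintype.card 𝒵),
            ← ENNReal.ofReal_mul (by positivity)]
          apply le_of_eq
          congr 1
          push_cast
          ring
  · -- RHS ≥ 1 regime
    push_neg at hc
    have hpos : (0:ℝ) ≤ n * δ0 ^ 3 := by positivity
    have h2c : Real.exp (2 * n * δ0 ^ 3) ≤ 2 := by
      refine le_trans (Real.exp_le_exp.mpr ?_) hc.le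
      nlinarith
    have he : (1:ℝ) / 2 ≤ Real.exp (-2 * n * δ0 ^ 3) := by
      rw [show -2 * (n:ℝ) * δ0 ^ 3 = -(2 * n * δ0 ^ 3) by ring, Real.exp_neg]
      rw [div_le_iff₀ (by norm_num : (0:ℝ) < 2)]
      rw [inv_mul_eq_div, le_div_iff₀ (Real.exp_pos _)]
      linarith
    have hone : (1:ℝ) ≤ (Fintype.card S : ℝ) * (Fintype.card 𝒵) *
        Real.exp (-2 * n * δ0 ^ 3) := by
      have hS : (1:ℝ) ≤ (Fintype.card S : ℝ) := by exact_mod_cast hS1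
      have hZ : (2:ℝ) ≤ (Fintype.card 𝒵 : ℝ) := by exact_mod_cast hZ1
      have hab : (2:ℝ) ≤ (Fintype.card S : ℝ) * (Fintype.card 𝒵) := by nlinarith
      calc (1:ℝ) = 2 * (1/2) := by norm_num
        _ ≤ ((Fintype.card S : ℝ) * (Fintype.card 𝒵)) * Real.exp (-2 * n * δ0 ^ 3) :=
            mul_le_mul hab he (by norm_num) (by positivity)
    calc μ _ ≤ 1 := prob_le_one
      _ = ENNReal.ofReal 1 := by rw [ENNReal.ofReal_one]
      _ ≤ _ := ENNReal.ofReal_le_ofReal hone
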